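/- Let w₁, w₂ ∈ Σ⁺ with lengths k₁, k₂, and r = ⌈(k₁+k₂)/2⌉. Then there exists a 1-D cellular automaton of radius r over Σ ∪ {⊥} and finite initial configuration c₀ = ⊥^ω w₁ w₂ ⊥^ω such that for all n ≥ 0, G^n(c₀) equals ⊥^ω w₁^{n+1} w₂^{n+1} ⊥^ω up to a position shift; hence the language { w₁ⁿ w₂ⁿ | n ≥ 1 } is generated by a radius-⌈(k₁+k₂)/2⌉ CA. -/

import Mathlib

/-- Global map of a 1-D cellular automaton of radius `r` with local rule `f`. -/
def glob {α : Type*} (r : ℕ) (f : (Fin (2 * r + 1) → α) → α) (c : ℤ → α) : ℤ → α :=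
  fun z => f (fun j => c (z + (j.val : ℤ) - (r : ℤ)))

/-- The finite configuration `⊥^ω w ⊥^ω`, with `w` placed at positions `0, …, |w| - 1`. -/
def padW {α : Type*} (bot : α) (w : List α) : ℤ → α :=
  fun z => if 0 ≤ z ∧ z < (w.length : ℤ) then w.getD z.toNat bot else bot

/-- The local rule: shift interior by `s = |w₁| - r`, grow a copy of `w₁` on the left and
`w₂` on the right. -/
def caF {α : Type*} (w₁ w₂ : List α) (r : ℕ)
    (W : Fin (2 * r + 1) → Option α) : Option α :=
  if hS : (Finset.univ.filter fun j => (W j).isSome).Nonempty then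
    if ¬(W ⟨0, by omega⟩).isSome ∧
        1 - ((w₁.length : ℤ) - r) ≤
          ((((Finset.univ.filter fun j => (W j).isSome).min' hS : Fin (2*r+1)) : ℤ) - r) then
      w₁[((r : ℤ) -
          (((((Finset.univ.filter fun j => (W j).isSome).min' hS : Fin (2*r+1)) : ℤ)) - r)).toNat]?
    else if ¬(W ⟨2*r, by omega⟩).isSome ∧
        ((((Finset.univ.filter fun j => (W j).isSome).max' hS : Fin (2*r+1)) : ℤ) - r) ≤
          -((w₁.length : ℤ) - r) - 1 then
      w₂[(-(((((Finset.univ.filter fun j => (W j).isSome).max' hS : Fin (2*r+1)) : ℤ)) - r)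
          - ((w₁.length : ℤ) - r) - 1).toNat]?
    else W ⟨2*r - w₁.length, by omega⟩
  else none

lemma caF_none {α : Type*} (w₁ w₂ : List α) (r : ℕ) :
    caF w₁ w₂ r (fun _ => none) = none := by
  simp [caF]

lemma padW_some {α : Type*} (u : List α) (z : ℤ) :
    padW none (u.map some) z = if 0 ≤ z ∧ z < (u.length : ℤ) then u[z.toNat]? else none := by
  unfold padW
  simp only [List.length_map]
  split
  · next h =>
    rw [List.getD_eq_getElem?_getD, List.getElem?_map]
    cases u[z.toNat]? <;> simp
  · rfl

lemma padW_some_isSome {α : Type*} (u : List α) (z : ℤ) :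
    (padW none (u.map some) z).isSome ↔ (0 ≤ z ∧ z < (u.length : ℤ)) := by
  rw [padW_some]
  split
  · next h =>
    rw [List.getElem?_eq_getElem (by omega : z.toNat < u.length)]
    simp only [Option.isSome_some, true_iff]
    exact h
  · next h =>
    simp only [Option.isSome_none, Bool.false_eq_true, false_iff]
    exact h

lemma minmax_filter {N : ℕ} (P : Fin (N+1) → Prop) [DecidablePred P] (a b : ℤ)
    (hP : ∀ j : Fin (N+1), P j ↔ a ≤ (j : ℤ) ∧ (j : ℤ) < b)
    (hS : (Finset.univ.filter P).Nonempty) :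
    (((Finset.univ.filter P).min' hS : Fin (N+1)) : ℤ) = max a 0 ∧
    (((Finset.univ.filter P).max' hS : Fin (N+1)) : ℤ) = min (b - 1) (N : ℤ) := by
  obtain ⟨j, hj⟩ := id hS
  rw [Finset.mem_filter] at hj
  have hj' := (hP j).1 hj.2
  have hjN : ((j : Fin (N+1)) : ℤ) < (N : ℤ) + 1 := by exact_mod_cast j.isLt
  have hm : (max a 0).toNat < N + 1 := by omega
  have hM : (min (b-1) (N:ℤ)).toNat < N + 1 := by omega
  have hmem_m : (⟨(max a 0).toNat, hm⟩ : Fin (N+1)) ∈ Finset.univ.filter P := by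
    rw [Finset.mem_filter]
    refine ⟨Finset.mem_univ _, (hP _).2 ?_⟩
    simp only
    omega
  have hmem_M : (⟨(min (b-1) (N:ℤ)).toNat, hM⟩ : Fin (N+1)) ∈ Finset.univ.filter P := by
    rw [Finset.mem_filter]
    refine ⟨Finset.mem_univ _, (hP _).2 ?_⟩
    simp only
    omega
  constructor
  · have h1 : (Finset.univ.filter P).min' hS ≤ ⟨(max a 0).toNat, hm⟩ :=
      Finset.min'_le _ _ hmem_m
    have h2 := (hP _).1 (Finset.mem_filter.1 ((Finset.univ.filter P).min'_mem hS)).2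
    have h1' : (((Finset.univ.filter P).min' hS : Fin (N+1)) : ℤ) ≤ ((max a 0).toNat : ℤ) := by
      exact_mod_cast h1
    omega
  · have h1 : (⟨(min (b-1) (N:ℤ)).toNat, hM⟩ : Fin (N+1)) ≤ (Finset.univ.filter P).max' hS :=
      Finset.le_max' _ _ hmem_M
    have h2 := (hP _).1 (Finset.mem_filter.1 ((Finset.univ.filter P).max'_mem hS)).2
    have h3 : (((Finset.univ.filter P).max' hS : Fin (N+1)) : ℤ) < (N : ℤ) + 1 := by
      exact_mod_cast ((Finset.univ.filter P).max' hS).isLt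
    have h1' : ((min (b-1) (N:ℤ)).toNat : ℤ) ≤ (((Finset.univ.filter P).max' hS : Fin (N+1)) : ℤ) := by
      exact_mod_cast h1
    omega

lemma caF_step {α : Type*} (w₁ w₂ u : List α) (hw₁ : w₁ ≠ []) (hw₂ : w₂ ≠ [])
    (hu : u ≠ []) (r : ℕ) (hr : r = (w₁.length + w₂.length + 1) / 2) (z : ℤ) :
    glob r (caF w₁ w₂ r) (padW none (u.map some)) z
      = padW none ((w₁ ++ u ++ w₂).map some) (z + r) := by
  have hk₁ : 1 ≤ w₁.length := List.length_pos_iff.2 hw₁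
  have hk₂ : 1 ≤ w₂.length := List.length_pos_iff.2 hw₂
  have hℓ : 1 ≤ u.length := List.length_pos_iff.2 hu
  have h2r1 : w₁.length + w₂.length ≤ 2*r := by omega
  have h2r2 : 2*r ≤ w₁.length + w₂.length + 1 := by omega
  rw [padW_some]
  show caF w₁ w₂ r (fun j => padW none (u.map some) (z + (j : ℤ) - r)) = _
  set W : Fin (2*r+1) → Option α := fun j => padW none (u.map some) (z + (j : ℤ) - r) with hWdef
  have hP : ∀ j : Fin (2*r+1),
      (W j).isSome ↔ ((r : ℤ) - z ≤ (j : ℤ) ∧ (j : ℤ) < (u.length : ℤ) + r - z) := by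
    intro j
    rw [hWdef]
    simp only
    rw [padW_some_isSome]
    constructor <;> (intro h; constructor <;> omega)
  unfold caF
  split
  case isFalse hS =>
    -- window all blank
    have hout : z < -(r:ℤ) ∨ (u.length : ℤ) + r ≤ z := by
      by_contra hcon
      push_neg at hcon
      apply hS
      refine ⟨⟨(max ((r:ℤ) - z) 0).toNat, by omega⟩, ?_⟩
      rw [Finset.mem_filter]
      refine ⟨Finset.mem_univ _, (hP _).2 ?_⟩
      simp only
      omega
    rw [if_neg]
    simp only [List.length_append, List.length_map]
    push_cast
    omega
  case isTrue hS =>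
    obtain ⟨hmin, hmax⟩ := minmax_filter _ ((r:ℤ) - z) ((u.length : ℤ) + r - z) hP hS
    obtain ⟨j₀, hj₀⟩ := id hS
    rw [Finset.mem_filter] at hj₀
    have hj₀' := (hP j₀).1 hj₀.2
    have hj₀N : ((j₀ : Fin (2*r+1)) : ℤ) < 2*(r:ℤ) + 1 := by exact_mod_cast j₀.isLt
    -- from nonemptiness: -r ≤ z < ℓ + r
    have hzlow : -(r:ℤ) ≤ z := by omega
    have hzhigh : z < (u.length : ℤ) + r := by omega
    have hW0 := hP ⟨0, by omega⟩
    have hWlast := hP ⟨2*r, by omega⟩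
    simp only [Fin.val_mk] at hW0 hWlast
    rw [hmin, hmax]
    push_cast at hW0 hWlast ⊢
    have hlen : ((w₁ ++ u ++ w₂).length : ℤ) = (w₁.length : ℤ) + u.length + w₂.length := by
      simp only [List.length_append]; push_cast; ring
    rw [hlen]
    rcases lt_or_ge (z + (r:ℤ)) (w₁.length : ℤ) with hA | hA
    · -- left region: 0 ≤ z+r < k₁
      have c0 : ¬(W ⟨0, by omega⟩).isSome = true := by rw [hW0]; omega
      rw [if_pos ⟨c0, by omega⟩, if_pos (by omega : 0 ≤ z + (r:ℤ) ∧
        z + (r:ℤ) < (w₁.length : ℤ) + u.length + w₂.length)]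
      rw [List.getElem?_append_left (l₂ := w₂) (by simp only [List.length_append]; omega),
        List.getElem?_append_left (by omega : (z + (r:ℤ)).toNat < w₁.length)]
      congr 1
      omega
    rcases lt_or_ge (z + (r:ℤ)) ((w₁.length : ℤ) + u.length) with hB | hB
    · -- copy region: k₁ ≤ z+r < k₁+ℓ
      rw [if_neg, if_neg]
      · -- value: W (2r - k₁) = u[z+r-k₁]
        have harg : (z + ((⟨2*r - w₁.length, by omega⟩ : Fin (2*r+1)) : ℤ) - r)
            = z + r - w₁.length := by
          simp only [Fin.val_mk]
          push_cast [Nat.cast_sub (by omega : w₁.length ≤ 2*r)]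
          ring
        show padW none (u.map some) _ = _
        rw [harg, padW_some,
          if_pos (by omega : 0 ≤ z + (r:ℤ) - w₁.length ∧ z + (r:ℤ) - w₁.length < (u.length:ℤ)),
          if_pos (by omega : 0 ≤ z + (r:ℤ) ∧ z + (r:ℤ) < (w₁.length : ℤ) + u.length + w₂.length)]
        rw [List.getElem?_append_left (l₂ := w₂) (by simp only [List.length_append]; omega),
          List.getElem?_append_right (by omega : w₁.length ≤ (z + (r:ℤ)).toNat)]
        congr 1
        omega
      · rintro ⟨c1, c2⟩
        rw [hWlast] at c1
        omega
      · rintro ⟨c1, c2⟩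
        rw [hW0] at c1
        omega
    · -- right region: z+r ≥ k₁+ℓ
      have c0 : ¬(W ⟨2*r, by omega⟩).isSome = true := by rw [hWlast]; omega
      rw [if_neg, if_pos ⟨c0, by omega⟩]
      · rcases lt_or_ge (z + (r:ℤ)) ((w₁.length : ℤ) + u.length + w₂.length) with hC | hC
        · rw [if_pos (by omega : 0 ≤ z + (r:ℤ) ∧
            z + (r:ℤ) < (w₁.length : ℤ) + u.length + w₂.length)]
          rw [List.getElem?_append_right (by simp only [List.length_append]; omega :
              (w₁ ++ u).length ≤ (z + (r:ℤ)).toNat)]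
          congr 1
          simp only [List.length_append]
          omega
        · rw [if_neg (by omega)]
          exact List.getElem?_eq_none (by omega)
      · rintro ⟨c1, c2⟩
        rw [hW0] at c1
        omega

lemma glob_shift {α : Type*} (r : ℕ) (f : (Fin (2*r+1) → α) → α) (c : ℤ → α) (a z : ℤ) :
    glob r f (fun y => c (y + a)) z = glob r f c (z + a) := by
  unfold glob
  congr 1
  funext j
  ring_nf

lemma iter_formula {α : Type*} (w₁ w₂ : List α) (hw₁ : w₁ ≠ []) (hw₂ : w₂ ≠ [])
    (r : ℕ) (hr : r = (w₁.length + w₂.length + 1) / 2) (n : ℕ) (z : ℤ) :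
    (glob r (caF w₁ w₂ r))^[n] (padW none ((w₁ ++ w₂).map some)) z =
      padW none (((List.replicate (n + 1) w₁).flatten ++ (List.replicate (n + 1) w₂).flatten).map
        some) (z + n * r) := by
  induction n generalizing z with
  | zero => simp
  | succ n ih =>
    rw [Function.iterate_succ_apply']
    have hfun : (glob r (caF w₁ w₂ r))^[n] (padW none ((w₁ ++ w₂).map some)) =
        fun y => padW none (((List.replicate (n + 1) w₁).flatten ++
          (List.replicate (n + 1) w₂).flatten).map some) (y + n * r) := funext fun y => ih y
    rw [hfun, glob_shift, caF_step w₁ w₂ _ hw₁ hw₂ ?hne r hr]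
    case hne =>
      have : 1 ≤ w₁.length := List.length_pos_iff.2 hw₁
      intro hcon
      have h1 := congrArg List.length hcon
      rw [List.length_append] at h1
      have h2 : ((List.replicate (n+1) w₁).flatten).length = (n+1) * w₁.length := by
        simp [List.length_flatten, List.map_replicate, List.sum_replicate]
      simp only [List.length_nil] at h1
      have h3 : 0 < (n+1) * w₁.length := Nat.mul_pos (by omega) (by omega)
      omega
    have harg : z + (n:ℤ) * r + r = z + ((n:ℕ)+1 : ℕ) * r := by push_cast; ring
    have hlist : w₁ ++ ((List.replicate (n + 1) w₁).flatten ++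
          (List.replicate (n + 1) w₂).flatten) ++ w₂ =
        (List.replicate (n + 1 + 1) w₁).flatten ++ (List.replicate (n + 1 + 1) w₂).flatten := by
      rw [List.replicate_succ (a := w₁) (n := n+1), List.replicate_succ' (n := n+1) (a := w₂)]
      simp [List.append_assoc]
    rw [hlist] at *
    rw [harg]

lemma padW_isSome_nm {α : Type*} (v : List (Option α)) (hv : none ∉ v) (y : ℤ) :
    (padW none v y).isSome ↔ (0 ≤ y ∧ y < (v.length : ℤ)) := by
  unfold padW
  split
  · next h =>
    rw [List.getD_eq_getElem v none (by omega : y.toNat < v.length)]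
    have : v[y.toNat] ≠ none := fun hc => hv (hc ▸ List.getElem_mem _)
    simp only [Option.isSome_iff_ne_none]
    exact iff_of_true this h
  · next h =>
    simp only [Option.isSome_none, Bool.false_eq_true, false_iff]
    exact h

lemma padW_unique {α : Type*} (v V : List (Option α)) (hv : none ∉ v) (hV : none ∉ V)
    (hVne : V ≠ []) (t t' : ℤ) (h : ∀ z : ℤ, padW none v (z - t) = padW none V (z - t')) :
    v = V ∧ t = t' := by
  have hsupp : ∀ z : ℤ, (0 ≤ z - t ∧ z - t < (v.length : ℤ)) ↔
      (0 ≤ z - t' ∧ z - t' < (V.length : ℤ)) := by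
    intro z
    rw [← padW_isSome_nm v hv, ← padW_isSome_nm V hV, h z]
  have hVlen : 1 ≤ V.length := List.length_pos_iff.2 hVne
  have hvlen : 1 ≤ v.length := by
    have := (hsupp t').2 (by omega)
    omega
  have h1 := (hsupp t').2 (by omega)
  have h2 := (hsupp t).1 (by omega)
  have h3 := (hsupp (t + v.length - 1)).1 (by omega)
  have h4 := (hsupp (t' + V.length - 1)).2 (by omega)
  have htt : t = t' := by omega
  have hlen : v.length = V.length := by omega
  refine ⟨?_, htt⟩
  apply List.ext_getElem hlen
  intro i hi hi'
  have := h (t + i)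
  rw [htt] at this
  unfold padW at this
  rw [if_pos (by omega), if_pos (by omega)] at this
  simp only [add_sub_cancel_left] at this
  rw [List.getD_eq_getElem v none (by omega : (i:ℤ).toNat < v.length),
    List.getD_eq_getElem V none (by omega : (i:ℤ).toNat < V.length)] at this
  convert this using 2
  all_goals omega

/-- Two-block case: for `w₁, w₂ ∈ Σ⁺` with lengths `k₁, k₂` and `r = ⌈(k₁+k₂)/2⌉`, there
exists a radius-`r` CA over `Σ ∪ {⊥}` (`⊥` = `none`) such that from `c₀ = ⊥^ω w₁ w₂ ⊥^ω`
one has `G^n(c₀) = ⊥^ω w₁^{n+1} w₂^{n+1} ⊥^ω` up to a position shift, for all `n ≥ 0`;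
hence the language `{w₁ⁿ w₂ⁿ | n ≥ 1}` (up to shift) is generated by a radius-`r` CA. -/
theorem stmt19 {α : Type*} (w₁ w₂ : List α) (hw₁ : w₁ ≠ []) (hw₂ : w₂ ≠ [])
    (r : ℕ) (hr : r = (w₁.length + w₂.length + 1) / 2) :
    ∃ f : (Fin (2 * r + 1) → Option α) → Option α,
      f (fun _ => none) = none ∧
      (∀ n : ℕ, ∃ s : ℤ, ∀ z : ℤ,
        (glob r f)^[n] (padW none ((w₁ ++ w₂).map some)) z =
          padW none
            (((List.replicate (n + 1) w₁).flatten ++ (List.replicate (n + 1) w₂).flatten).map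
              some) (z - s)) ∧
      ({ v : List (Option α) | none ∉ v ∧
          ∃ (n : ℕ) (t : ℤ), ∀ z : ℤ,
            (glob r f)^[n] (padW none ((w₁ ++ w₂).map some)) z = padW none v (z - t) }
        = { v : List (Option α) | ∃ m : ℕ, 1 ≤ m ∧
            v = ((List.replicate m w₁).flatten ++ (List.replicate m w₂).flatten).map some }) := by
  refine ⟨caF w₁ w₂ r, caF_none w₁ w₂ r, ?_, ?_⟩
  · intro n
    refine ⟨-(n * r), fun z => ?_⟩
    rw [iter_formula w₁ w₂ hw₁ hw₂ r hr n z]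
    congr 1
    ring
  · ext v
    simp only [Set.mem_setOf_eq]
    constructor
    · rintro ⟨hv, n, t, hvt⟩
      refine ⟨n + 1, by omega, ?_⟩
      have hVnm : none ∉ (((List.replicate (n+1) w₁).flatten ++
          (List.replicate (n+1) w₂).flatten).map some) := by simp
      have hVne : (((List.replicate (n+1) w₁).flatten ++
          (List.replicate (n+1) w₂).flatten).map some) ≠ [] := by
        intro hcon
        have h1 := congrArg List.length hcon
        simp only [List.length_map, List.length_append, List.length_nil] at h1
        have h2 : ((List.replicate (n+1) w₁).flatten).length = (n+1) * w₁.length := by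
          simp [List.length_flatten, List.map_replicate, List.sum_replicate]
        have h3 : 0 < (n+1) * w₁.length :=
          Nat.mul_pos (by omega) (List.length_pos_iff.2 hw₁)
        omega
      refine (padW_unique v _ hv hVnm hVne t (-(n * r)) fun z => ?_).1
      rw [← hvt z, iter_formula w₁ w₂ hw₁ hw₂ r hr n z]
      congr 1
      ring
    · rintro ⟨m, hm, rfl⟩
      refine ⟨by simp, m - 1, -((m - 1 : ℕ) * r), fun z => ?_⟩
      rw [iter_formula w₁ w₂ hw₁ hw₂ r hr (m-1) z]
      have : m - 1 + 1 = m := by omega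
      rw [this]
      congr 1
      ring
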